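/- Let $G$ be a group, $k$ a field, and $M$ a simple $kG$-module with $C_G(M) = 1$. If $A$ is a nontrivial finite abelian normal $p$-subgroup of $G$, then $p \neq \mathrm{char}\, k$. -/

import Mathlib

/-- If a simple faithful `kG`-module exists and `A` is a nontrivial finite abelian normal
`p`-subgroup of `G`, then `p ≠ char k`. -/
theorem stmt_8 {k G M : Type*} [Field k] [Group G] [AddCommGroup M] [Module k M]
    (ρ : Representation k G M) (hnt : Nontrivial M)
    (hsimple : ∀ W : Submodule k M, (∀ g : G, ∀ m ∈ W, ρ g m ∈ W) → W = ⊥ ∨ W = ⊤)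
    (hfaith : ∀ g : G, (∀ m : M, ρ g m = m) → g = 1)
    (p : ℕ) (hp : p.Prime) (A : Subgroup G) (hAn : A.Normal) (hAne : A ≠ ⊥)
    (hAfin : Finite A) (hAcomm : ∀ a ∈ A, ∀ b ∈ A, a * b = b * a)
    (hApgrp : ∀ a ∈ A, ∃ m : ℕ, a ^ p ^ m = 1) :
    ringChar k ≠ p := by
  intro hchar
  haveI : Fact p.Prime := ⟨hp⟩
  haveI : CharP k p := hchar ▸ ringChar.charP k
  haveI : CharP (Module.End k M) p :=
    charP_of_injective_algebraMap' (A := Module.End k M) k p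
  -- each ρ a - 1 with a ∈ A is "nilpotent on" M
  have hnil : ∀ a ∈ A, ∃ e : ℕ, (ρ a - 1 : Module.End k M) ^ e = 0 := by
    intro a ha
    obtain ⟨m, hm⟩ := hApgrp a ha
    refine ⟨p ^ m, ?_⟩
    rw [sub_pow_char_pow_of_commute p m (Commute.one_right _),
      one_pow, ← map_pow, hm, map_one, sub_self]
  -- commuting endomorphisms
  have hcomm : ∀ a ∈ A, ∀ b ∈ A, Commute (ρ a) (ρ b) := by
    intro a ha b hb
    show ρ a * ρ b = ρ b * ρ a
    rw [← map_mul, ← map_mul, hAcomm a ha b hb]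
  haveI : Fintype A := Fintype.ofFinite A
  -- common nonzero fixed vector for any finset of elements of A
  have key : ∀ S : Finset A, ∃ m : M, m ≠ 0 ∧ ∀ a ∈ S, ρ (a : G) m = m := by
    intro S
    classical
    induction S using Finset.induction_on with
    | empty =>
      obtain ⟨m, hm⟩ := exists_ne (0 : M)
      exact ⟨m, hm, by simp⟩
    | @insert a S haS ih =>
      obtain ⟨m, hm0, hmfix⟩ := ih
      have hex : ∃ e : ℕ, ((ρ (a : G) - 1 : Module.End k M) ^ e) m = 0 := by
        obtain ⟨e, he⟩ := hnil a a.2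
        exact ⟨e, by rw [he]; rfl⟩
      classical
      set j := Nat.find hex with hj
      have hj0 : j ≠ 0 := by
        intro h
        have := Nat.find_spec hex
        rw [← hj, h, pow_zero] at this
        exact hm0 this
      set m' := ((ρ (a : G) - 1 : Module.End k M) ^ (j - 1)) m with hm'
      have hm'0 : m' ≠ 0 := Nat.find_min hex (Nat.sub_lt (Nat.pos_of_ne_zero hj0) one_pos)
      refine ⟨m', hm'0, ?_⟩
      intro b hb
      rcases Finset.mem_insert.mp hb with hb | hb
      · -- b = a : ρ a m' = m'
        subst hb
        have : ((ρ (b : G) - 1 : Module.End k M) ^ j) m = 0 := Nat.find_spec hex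
        have h1 : (ρ (b : G) - 1 : Module.End k M) m' = 0 := by
          rw [hm', ← Module.End.mul_apply, ← pow_succ', Nat.sub_add_cancel
            (Nat.one_le_iff_ne_zero.mpr hj0)]
          exact this
        have := sub_eq_zero.mp (by simpa using h1)
        simpa using this
      · -- b ∈ S : ρ b commutes with (ρ a - 1)^(j-1)
        have hc : Commute (ρ (b : G)) ((ρ (a : G) - 1 : Module.End k M) ^ (j - 1)) :=
          ((hcomm b b.2 a a.2).sub_right (Commute.one_right _)).pow_right _
        rw [hm', ← Module.End.mul_apply, hc.eq, Module.End.mul_apply, hmfix b hb]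
  -- the fixed-point submodule of A
  obtain ⟨m, hm0, hmfix⟩ := key Finset.univ
  set W : Submodule k M :=
    { carrier := {x | ∀ a ∈ A, ρ a x = x}
      add_mem' := fun hx hy a ha => by rw [map_add, hx a ha, hy a ha]
      zero_mem' := fun a ha => map_zero _
      smul_mem' := fun c x hx a ha => by rw [map_smul, hx a ha] } with hW
  have hWinv : ∀ g : G, ∀ x ∈ W, ρ g x ∈ W := by
    intro g x hx a ha
    have hmem : g⁻¹ * a * g ∈ A := hAn.conj_mem' a ha g
    calc ρ a (ρ g x) = ρ (a * g) x := by rw [← Module.End.mul_apply, ← map_mul]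
      _ = ρ (g * (g⁻¹ * a * g)) x := by group
      _ = ρ g (ρ (g⁻¹ * a * g) x) := by rw [map_mul]; rfl
      _ = ρ g x := by rw [hx _ hmem]
  have hWne : W ≠ ⊥ := by
    intro h
    have hmW : m ∈ W := fun a ha => hmfix ⟨a, ha⟩ (Finset.mem_univ _)
    rw [h, Submodule.mem_bot] at hmW
    exact hm0 hmW
  rcases hsimple W hWinv with h | h
  · exact hWne h
  · -- A acts trivially, so A = ⊥
    apply hAne
    rw [Subgroup.eq_bot_iff_forall]
    intro a ha
    apply hfaith
    intro x
    have hx : x ∈ W := h ▸ Submodule.mem_top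
    exact hx a ha
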